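/- An induced cycle of length at least 5 in a graph $G$ contains at most one vertex from any set of pairwise twins of $G$. -/

import Mathlib

open SimpleGraph
open scoped Fin.CommRing Fin.NatCast

def Twins {V : Type*} (G : SimpleGraph V) (v w : V) : Prop :=
  v ≠ w ∧ ∀ x : V, x ≠ v → x ≠ w → (G.Adj v x ↔ G.Adj w x)

def cycleAdj (n : ℕ) (i j : Fin n) : Prop :=
  i ≠ j ∧ ((i.val + 1) % n = j.val ∨ (j.val + 1) % n = i.val)

/-- An induced cycle of length at least 5 contains at most one vertex from any
set of pairwise twins. -/
theorem stmt7 {V : Type*} (G : SimpleGraph V) (n : ℕ) (hn : 5 ≤ n)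
    (f : Fin n → V) (hinj : Function.Injective f)
    (hcyc : ∀ i j : Fin n, G.Adj (f i) (f j) ↔ cycleAdj n i j)
    (A : Set V) (hA : ∀ v ∈ A, ∀ w ∈ A, v ≠ w → Twins G v w) :
    ∀ i j : Fin n, f i ∈ A → f j ∈ A → i = j := by
  haveI : NeZero n := ⟨by omega⟩
  have hval : ∀ a b : Fin n, (a.val + 1) % n = b.val ↔ a + 1 = b := by
    intro a b
    have h1 : ((a + 1 : Fin n) : ℕ) = (a.val + 1) % n := by
      simp [Fin.add_def, Fin.val_one', Nat.mod_eq_of_lt (show 1 < n by omega)]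
    rw [← h1, Fin.val_inj]
  have hC : ∀ a b : Fin n, G.Adj (f a) (f b) ↔ (a ≠ b ∧ (a + 1 = b ∨ b + 1 = a)) := by
    intro a b
    rw [hcyc]
    unfold cycleAdj
    rw [hval a b, hval b a]
  have hnz : ∀ k : ℕ, 0 < k → k < n → (k : Fin n) ≠ 0 := by
    intro k hk hkn h
    have := congrArg Fin.val h
    rw [Fin.val_natCast, Nat.mod_eq_of_lt hkn] at this
    simp at this; omega
  have h1 : (1 : Fin n) ≠ 0 := by have := hnz 1 (by omega) (by omega); simpa using this
  have h2 : (2 : Fin n) ≠ 0 := by have := hnz 2 (by omega) (by omega); simpa using this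
  have h3 : (3 : Fin n) ≠ 0 := by have := hnz 3 (by omega) (by omega); simpa using this
  have h4 : (4 : Fin n) ≠ 0 := by have := hnz 4 (by omega) (by omega); simpa using this
  intro i j hi hj
  by_contra hij
  have hfij : f i ≠ f j := fun h => hij (hinj h)
  obtain ⟨-, hT⟩ := hA (f i) hi (f j) hj hfij
  by_cases hj1 : j = i + 1
  · -- j is the successor of i; transfer the neighbor i - 1
    have hx1 : i - 1 ≠ i := fun h => h1 (by linear_combination -h)
    have hx2 : i - 1 ≠ j := by
      rw [hj1]; intro h; exact h2 (by linear_combination -h)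
    have hadj : G.Adj (f i) (f (i - 1)) :=
      (hC i (i - 1)).2 ⟨fun h => hx1 h.symm, Or.inr (by ring)⟩
    have hadj' := (hT (f (i - 1)) (fun h => hx1 (hinj h)) (fun h => hx2 (hinj h))).1 hadj
    rw [hC] at hadj'
    obtain ⟨-, h | h⟩ := hadj'
    · rw [hj1] at h; exact h3 (by linear_combination h)
    · exact hij (by linear_combination h)
  · by_cases hj2 : j + 1 = i
    · -- j is the predecessor of i; transfer the neighbor i + 1
      have hx1 : i + 1 ≠ i := fun h => h1 (by linear_combination h)
      have hx2 : i + 1 ≠ j := fun h => h2 (by linear_combination h + hj2)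
      have hadj : G.Adj (f i) (f (i + 1)) :=
        (hC i (i + 1)).2 ⟨fun h => hx1 h.symm, Or.inl rfl⟩
      have hadj' := (hT (f (i + 1)) (fun h => hx1 (hinj h)) (fun h => hx2 (hinj h))).1 hadj
      rw [hC] at hadj'
      obtain ⟨-, h | h⟩ := hadj'
      · exact hij (add_right_cancel h).symm
      · exact h3 (by linear_combination h + hj2)
    · -- j is not a cycle neighbor of i; transfer both neighbors of i
      have hp1 : i + 1 ≠ i := fun h => h1 (by linear_combination h)
      have hp2 : i + 1 ≠ j := fun h => hj1 h.symm
      have hadjp : G.Adj (f i) (f (i + 1)) :=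
        (hC i (i + 1)).2 ⟨fun h => hp1 h.symm, Or.inl rfl⟩
      have hadjp' := (hT (f (i + 1)) (fun h => hp1 (hinj h)) (fun h => hp2 (hinj h))).1 hadjp
      rw [hC] at hadjp'
      obtain ⟨-, hq | he1⟩ := hadjp'
      · exact hij (add_right_cancel hq).symm
      have hm1 : i - 1 ≠ i := fun h => h1 (by linear_combination -h)
      have hm2 : i - 1 ≠ j := fun h => hj2 (by linear_combination -h)
      have hadjm : G.Adj (f i) (f (i - 1)) :=
        (hC i (i - 1)).2 ⟨fun h => hm1 h.symm, Or.inr (by ring)⟩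
      have hadjm' := (hT (f (i - 1)) (fun h => hm1 (hinj h)) (fun h => hm2 (hinj h))).1 hadjm
      rw [hC] at hadjm'
      obtain ⟨-, he2 | hq⟩ := hadjm'
      · exact h4 (by linear_combination he1 + he2)
      · exact hij (by linear_combination hq)
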